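/- (Feedback lemma.) Let F : [1, ∞) → [0, ∞) be nondecreasing with F(R) ≤ C₁ R^d for all R ≥ 1 (some C₁, d > 0), and suppose there exist constants C > 0, ã > 0 and b̃ ∈ [0, 1) such that F(R) ≤ C R^{−ã} F(4R)^{b̃} for all R ≥ 1. Then F ≡ 0. -/
import Mathlib


/-- Feedback lemma: if `F : [1,∞) → [0,∞)` is nondecreasing with polynomial growth
`F(R) ≤ C₁ R^d`, and satisfies the sublinear feedback inequality
`F(R) ≤ C R^{-ã} F(4R)^{b̃}` for all `R ≥ 1`, with `ã > 0` and `0 ≤ b̃ < 1`,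
then `F ≡ 0` on `[1,∞)`. -/
theorem feedback_lemma
    (F : ℝ → ℝ) (hFnonneg : ∀ R : ℝ, 1 ≤ R → 0 ≤ F R)
    (hFmono : ∀ R S : ℝ, 1 ≤ R → R ≤ S → F R ≤ F S)
    (C₁ d : ℝ) (hC₁ : 0 < C₁) (hd : 0 < d)
    (hgrowth : ∀ R : ℝ, 1 ≤ R → F R ≤ C₁ * R ^ d)
    (C atil btil : ℝ) (hC : 0 < C) (hatil : 0 < atil) (hbtil0 : 0 ≤ btil) (hbtil1 : btil < 1)
    (hfeedback : ∀ R : ℝ, 1 ≤ R → F R ≤ C * R ^ (-atil) * F (4 * R) ^ btil) :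
    ∀ R : ℝ, 1 ≤ R → F R = 0 := by
  set e : ℕ → ℝ := fun n => d * btil ^ n - atil * ∑ i ∈ Finset.range n, btil ^ i with he
  have key : ∀ n : ℕ, ∃ K : ℝ, 0 < K ∧ ∀ S : ℝ, 1 ≤ S → F S ≤ K * S ^ (e n) := by
    intro n
    induction n with
    | zero =>
      refine ⟨C₁, hC₁, fun S hS => ?_⟩
      simpa [he] using hgrowth S hS
    | succ n ih =>
      obtain ⟨K, hK, hKb⟩ := ih
      have h4e : (0:ℝ) < (4:ℝ) ^ (e n) := Real.rpow_pos_of_pos (by norm_num) _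
      refine ⟨C * (K * (4:ℝ) ^ (e n)) ^ btil, by positivity, fun S hS => ?_⟩
      have hS0 : (0:ℝ) < S := lt_of_lt_of_le one_pos hS
      have h4S : (1:ℝ) ≤ 4 * S := by nlinarith
      have hF4S : F (4 * S) ≤ K * (4 * S) ^ (e n) := hKb _ h4S
      have step1 : F S ≤ C * S ^ (-atil) * (K * (4 * S) ^ (e n)) ^ btil := by
        refine le_trans (hfeedback S hS) ?_
        gcongr
        exact hFnonneg _ h4S
      have hrw : C * S ^ (-atil) * (K * (4 * S) ^ (e n)) ^ btil
          = C * (K * (4:ℝ) ^ (e n)) ^ btil * S ^ (e n * btil - atil) := by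
        rw [Real.mul_rpow (by norm_num : (0:ℝ) ≤ 4) hS0.le,
            show K * ((4:ℝ) ^ (e n) * S ^ (e n)) = (K * (4:ℝ) ^ (e n)) * S ^ (e n) by ring,
            Real.mul_rpow (by positivity) (Real.rpow_nonneg hS0.le _),
            ← Real.rpow_mul hS0.le, Real.rpow_sub hS0, Real.rpow_neg hS0.le]
        ring
      have hexp : e (n + 1) = e n * btil - atil := by
        simp only [he, geom_sum_succ, pow_succ]
        ring
      rw [hexp]
      calc F S ≤ C * S ^ (-atil) * (K * (4 * S) ^ (e n)) ^ btil := step1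
        _ = C * (K * (4:ℝ) ^ (e n)) ^ btil * S ^ (e n * btil - atil) := hrw
  -- choose n with e n < 0
  have hbn : Filter.Tendsto (fun n : ℕ => d * btil ^ n) Filter.atTop (nhds 0) := by
    have := tendsto_pow_atTop_nhds_zero_of_lt_one hbtil0 hbtil1
    simpa using this.const_mul d
  obtain ⟨n, hn⟩ := (hbn.eventually (eventually_lt_nhds hatil)).exists
  have hsum : (1:ℝ) ≤ ∑ i ∈ Finset.range (n + 1), btil ^ i := by
    have : ∀ i ∈ Finset.range (n + 1), (0:ℝ) ≤ btil ^ i := fun i _ => pow_nonneg hbtil0 i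
    calc (1:ℝ) = btil ^ 0 := by norm_num
      _ ≤ ∑ i ∈ Finset.range (n + 1), btil ^ i :=
        Finset.single_le_sum this (Finset.mem_range.mpr (Nat.succ_pos n))
  have hen : e (n + 1) < 0 := by
    have h1 : d * btil ^ (n + 1) ≤ d * btil ^ n := by
      have : btil ^ (n+1) ≤ btil ^ n := pow_le_pow_of_le_one hbtil0 hbtil1.le (Nat.le_succ n)
      nlinarith
    have h2 : atil * 1 ≤ atil * ∑ i ∈ Finset.range (n + 1), btil ^ i := by
      exact mul_le_mul_of_nonneg_left hsum hatil.le
    simp only [he]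
    nlinarith
  obtain ⟨K, hK, hKb⟩ := key (n + 1)
  intro R hR
  refine le_antisymm ?_ (hFnonneg R hR)
  have htend : Filter.Tendsto (fun S : ℝ => K * S ^ (e (n+1))) Filter.atTop (nhds 0) := by
    have := tendsto_rpow_neg_atTop (show 0 < -(e (n+1)) by linarith)
    simp only [neg_neg] at this
    simpa using this.const_mul K
  refine ge_of_tendsto htend ?_
  filter_upwards [Filter.eventually_ge_atTop R, Filter.eventually_ge_atTop 1] with S hSR hS1
  exact le_trans (hFmono R S hR hSR) (hKb S hS1)
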